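/- arXiv:2601.11570 — 2 statements merged into one kernel-verified Lean document; each statement's English description precedes it below -/
import Mathlib

section
/- Let b > 0, M > 0, and let M′ ∈ ℝ satisfy |M′| ≤ M. Let p_b(s) = (1/(2b))·exp(−|s|/b) be the Laplace density with scale b. Then for all real numbers a ≤ c, ∫_{[a+M′, c+M′]} p_b(s) ds ≤ exp(M/b) · ∫_{[a, c]} p_b(s) ds; in probabilistic terms, if η ∼ Lap(b) then Pr(a + M′ ≤ η ≤ c + M′) ≤ e^{M/b} · Pr(a ≤ η ≤ c). (The paper's Lemma on Laplacian noise together with its extension to smaller shifts used in the proof of the additive-mechanism theorem.) -/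
open MeasureTheory

lemma laplace_density_cont (b : ℝ) :
    Continuous fun s : ℝ => (1 / (2 * b)) * Real.exp (-|s| / b) := by
  continuity

/-- Laplace shift lemma: for `b > 0`, `M > 0`, `|M′| ≤ M`, and `a ≤ c`,
`Pr(a + M′ ≤ η ≤ c + M′) ≤ e^{M/b} · Pr(a ≤ η ≤ c)` for `η ∼ Lap(b)`, i.e.
`∫_{[a+M′, c+M′]} p_b(s) ds ≤ exp(M/b) · ∫_{[a, c]} p_b(s) ds` with
`p_b(s) = (1/(2b))·exp(−|s|/b)`. -/
theorem laplace_shift_probability_bound (b M M' : ℝ) (hb : 0 < b) (hM : 0 < M)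
    (hM' : |M'| ≤ M) :
    ∀ a c : ℝ, a ≤ c →
      (∫ s in Set.Icc (a + M') (c + M'), (1 / (2 * b)) * Real.exp (-|s| / b)) ≤
        Real.exp (M / b) * ∫ s in Set.Icc a c, (1 / (2 * b)) * Real.exp (-|s| / b) := by
  intro a c hac
  have hcont := laplace_density_cont b
  have hcont' : Continuous fun s : ℝ =>
      Real.exp (M / b) * ((1 / (2 * b)) * Real.exp (-|s| / b)) :=
    continuous_const.mul hcont
  have h1 : (∫ s in Set.Icc (a + M') (c + M'), (1 / (2 * b)) * Real.exp (-|s| / b)) =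
      ∫ s in (a + M')..(c + M'), (1 / (2 * b)) * Real.exp (-|s| / b) := by
    rw [intervalIntegral.integral_of_le (by linarith), integral_Icc_eq_integral_Ioc]
  have h2 : (∫ s in Set.Icc a c, (1 / (2 * b)) * Real.exp (-|s| / b)) =
      ∫ s in a..c, (1 / (2 * b)) * Real.exp (-|s| / b) := by
    rw [intervalIntegral.integral_of_le hac, integral_Icc_eq_integral_Ioc]
  rw [h1, h2]
  have hshift : (∫ s in (a + M')..(c + M'), (1 / (2 * b)) * Real.exp (-|s| / b)) =
      ∫ s in a..c, (1 / (2 * b)) * Real.exp (-|s + M'| / b) := by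
    rw [← intervalIntegral.integral_comp_add_right
      (fun s => (1 / (2 * b)) * Real.exp (-|s| / b)) M']
  rw [hshift, ← intervalIntegral.integral_const_mul]
  apply intervalIntegral.integral_mono_on hac
  · exact (Continuous.intervalIntegrable (by continuity) a c)
  · exact hcont'.intervalIntegrable a c
  · intro s _
    rw [← mul_assoc, mul_comm (Real.exp (M / b)) (1 / (2 * b)), mul_assoc]
    apply mul_le_mul_of_nonneg_left _ (by positivity)
    rw [← Real.exp_add]
    apply Real.exp_le_exp.2
    have habs : |s| - |s + M'| ≤ M := by
      have := abs_sub_abs_le_abs_sub s (s + M')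
      simp only [sub_add_cancel_left, abs_neg] at this
      linarith
    rw [← add_div, div_le_div_iff₀ hb hb]
    nlinarith
end

section
/- Let u > 0, h₁, h₂ ∈ ℝ, and v₁, v₂ ∈ ℝ with v₁ ≠ 0 and v₂ ≠ 0. For i = 1, 2 let μᵢ be the law of hᵢ + γ·vᵢ where γ is uniform on [−u, u], i.e., μᵢ is the pushforward of (2u)⁻¹·(Lebesgue measure restricted to [−u, u]) under γ ↦ hᵢ + γ·vᵢ. Then for every Lebesgue-measurable set S contained in [h₂ − u·|v₂|, h₂ + u·|v₂|], μ₁(S) ≤ exp(|ln(|v₂|/|v₁|)|) · μ₂(S). (The paper's theorem that the operator B_k(z_j) = h(x̂_j) + γ_k·(f(x̂_j) + h(x̂_j)) is ε′_k-differentially private with privacy budget ε′_k = max_j |ln(|f(x̂_{j+1}) + h(x̂_{j+1})| / |f(x̂_j) + h(x̂_j)|)|, stated on output sets contained in the support of the neighboring mechanism with v₁ = f(x̂_j) + h(x̂_j) and v₂ = f(x̂_{j+1}) + h(x̂_{j+1}).) -/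
open MeasureTheory

lemma preimage_affine_volume (h v : ℝ) (hv : v ≠ 0) (S : Set ℝ) :
    volume ((fun γ : ℝ => h + γ * v) ⁻¹' S) = ENNReal.ofReal |v⁻¹| * volume S := by
  have : (fun γ : ℝ => h + γ * v) ⁻¹' S = (· * v) ⁻¹' ((h + ·) ⁻¹' S) := rfl
  rw [this, Real.volume_preimage_mul_right hv, measure_preimage_add]

/-- Differential privacy of the multiplicative-noise mechanism: let `γ` be uniform on
`[−u, u]` (`u > 0`), and for `i = 1, 2` let `μᵢ` be the law of `hᵢ + γ·vᵢ` with `vᵢ ≠ 0`.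
Then for every measurable `S` contained in the support `[h₂ − u·|v₂|, h₂ + u·|v₂|]` of
`μ₂`, one has `μ₁(S) ≤ exp(|ln(|v₂|/|v₁|)|) · μ₂(S)`. -/
theorem multiplicative_mechanism_diff_private (u h₁ h₂ v₁ v₂ : ℝ) (hu : 0 < u)
    (hv₁ : v₁ ≠ 0) (hv₂ : v₂ ≠ 0)
    (μ₁ μ₂ : Measure ℝ)
    (hμ₁ : μ₁ = Measure.map (fun γ : ℝ => h₁ + γ * v₁)
        ((ENNReal.ofReal (2 * u))⁻¹ • volume.restrict (Set.Icc (-u) u)))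
    (hμ₂ : μ₂ = Measure.map (fun γ : ℝ => h₂ + γ * v₂)
        ((ENNReal.ofReal (2 * u))⁻¹ • volume.restrict (Set.Icc (-u) u))) :
    ∀ S : Set ℝ, MeasurableSet S →
      S ⊆ Set.Icc (h₂ - u * |v₂|) (h₂ + u * |v₂|) →
        μ₁ S ≤ ENNReal.ofReal (Real.exp |Real.log (|v₂| / |v₁|)|) * μ₂ S := by
  intro S hS hSsub
  have hm₁ : Measurable fun γ : ℝ => h₁ + γ * v₁ := by fun_prop
  have hm₂ : Measurable fun γ : ℝ => h₂ + γ * v₂ := by fun_prop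
  set P₁ := (fun γ : ℝ => h₁ + γ * v₁) ⁻¹' S with hP₁
  set P₂ := (fun γ : ℝ => h₂ + γ * v₂) ⁻¹' S with hP₂
  have habs₁ : (0:ℝ) < |v₁| := abs_pos.mpr hv₁
  have habs₂ : (0:ℝ) < |v₂| := abs_pos.mpr hv₂
  -- P₂ is contained in [-u, u]
  have hP₂sub : P₂ ⊆ Set.Icc (-u) u := by
    intro γ hγ
    have h := hSsub hγ
    simp only [Set.mem_Icc] at h ⊢
    have h1 : -(u * |v₂|) ≤ γ * v₂ := by linarith [h.1]
    have h2 : γ * v₂ ≤ u * |v₂| := by linarith [h.2]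
    have : |γ * v₂| ≤ u * |v₂| := abs_le.mpr ⟨h1, h2⟩
    rw [abs_mul] at this
    have hgu : |γ| ≤ u := le_of_mul_le_mul_right (by linarith) habs₂
    exact abs_le.mp hgu
  rw [hμ₁, hμ₂, Measure.map_apply hm₁ hS, Measure.map_apply hm₂ hS]
  simp only [Measure.smul_apply, Measure.restrict_apply (hm₁ hS),
    Measure.restrict_apply (hm₂ hS), smul_eq_mul, ← hP₁, ← hP₂]
  have hμ₂val : P₂ ∩ Set.Icc (-u) u = P₂ := Set.inter_eq_left.mpr hP₂sub
  rw [Measure.restrict_apply (show MeasurableSet P₁ from hm₁ hS),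
    Measure.restrict_apply (show MeasurableSet P₂ from hm₂ hS)]
  rw [hμ₂val, preimage_affine_volume h₂ v₂ hv₂ S]
  have hμ₁le : volume (P₁ ∩ Set.Icc (-u) u) ≤ ENNReal.ofReal |v₁⁻¹| * volume S := by
    calc volume (P₁ ∩ Set.Icc (-u) u) ≤ volume P₁ := measure_mono Set.inter_subset_left
    _ = ENNReal.ofReal |v₁⁻¹| * volume S := preimage_affine_volume h₁ v₁ hv₁ S
  -- key scalar inequality
  have hkey : ENNReal.ofReal |v₁⁻¹| ≤
      ENNReal.ofReal (Real.exp |Real.log (|v₂| / |v₁|)|) * ENNReal.ofReal |v₂⁻¹| := by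
    rw [← ENNReal.ofReal_mul (Real.exp_pos _).le]
    apply ENNReal.ofReal_le_ofReal
    have hr : (0:ℝ) < |v₂| / |v₁| := div_pos habs₂ habs₁
    have h1 : |v₂| / |v₁| ≤ Real.exp |Real.log (|v₂| / |v₁|)| := by
      calc |v₂| / |v₁| = Real.exp (Real.log (|v₂| / |v₁|)) := (Real.exp_log hr).symm
      _ ≤ Real.exp |Real.log (|v₂| / |v₁|)| := Real.exp_le_exp.mpr (le_abs_self _)
    simp only [abs_inv]
    calc |v₁|⁻¹ = (|v₂| / |v₁|) * |v₂|⁻¹ := by field_simp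
    _ ≤ Real.exp |Real.log (|v₂| / |v₁|)| * |v₂|⁻¹ :=
        mul_le_mul_of_nonneg_right h1 (inv_nonneg.mpr habs₂.le)
  calc (ENNReal.ofReal (2 * u))⁻¹ * volume (P₁ ∩ Set.Icc (-u) u)
      ≤ (ENNReal.ofReal (2 * u))⁻¹ * (ENNReal.ofReal |v₁⁻¹| * volume S) :=
        mul_le_mul_right hμ₁le _
    _ ≤ (ENNReal.ofReal (2 * u))⁻¹ *
        ((ENNReal.ofReal (Real.exp |Real.log (|v₂| / |v₁|)|) * ENNReal.ofReal |v₂⁻¹|) * volume S) :=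
        mul_le_mul_right (mul_le_mul_left hkey _) _
    _ = ENNReal.ofReal (Real.exp |Real.log (|v₂| / |v₁|)|) *
        ((ENNReal.ofReal (2 * u))⁻¹ * (ENNReal.ofReal |v₂⁻¹| * volume S)) := by ring
end
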